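/- The constant 1/3 in x/tan x < e^(-c·x²) for all x in (0, x₀) is best possible: if x/tan x < e^(-c·x²) holds for all x in (0, x₀) ⊆ (0, π/2), then c ≤ 1/3. -/

import Mathlib

theorem stmt_14 (x₀ c : ℝ) (hx₀ : x₀ ∈ Set.Ioo (0:ℝ) (Real.pi/2))
    (h : ∀ x ∈ Set.Ioo 0 x₀, x / Real.tan x < Real.exp (-c * x^2)) : c ≤ 1/3 := by
  by_contra hc
  push_neg at hc
  have hc0 : 0 < c := lt_trans (by norm_num) hc
  set ε : ℝ := (c - 1/3) / (5/96 + c/2) with hε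
  have hεpos : 0 < ε := div_pos (by linarith) (by linarith)
  obtain ⟨hx₀0, hx₀π⟩ := hx₀
  set x : ℝ := min x₀ (min 1 ε) / 2 with hxdef
  have hx0 : 0 < x := by
    have : 0 < min x₀ (min 1 ε) := lt_min hx₀0 (lt_min one_pos hεpos)
    linarith
  have hxx₀ : x < x₀ := by
    have h1 : min x₀ (min 1 ε) ≤ x₀ := min_le_left _ _
    have : 0 < min x₀ (min 1 ε) := lt_min hx₀0 (lt_min one_pos hεpos)
    rw [hxdef]; linarith
  have hx1 : x ≤ 1 := by
    have h1 : min x₀ (min 1 ε) ≤ 1 := le_trans (min_le_right _ _) (min_le_left _ _)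
    rw [hxdef]; linarith [lt_min hx₀0 (lt_min one_pos hεpos)]
  have hxε : x < ε := by
    have h1 : min x₀ (min 1 ε) ≤ ε := le_trans (min_le_right _ _) (min_le_right _ _)
    rw [hxdef]; linarith
  have hxπ : x < Real.pi / 2 := lt_trans hxx₀ hx₀π
  have hsin : 0 < Real.sin x := Real.sin_pos_of_pos_of_lt_pi hx0
    (lt_trans hxπ (by linarith [Real.pi_pos]))
  have hcos : 0 < Real.cos x := Real.cos_pos_of_mem_Ioo ⟨by linarith, hxπ⟩
  have hkey := h x ⟨hx0, hxx₀⟩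
  rw [Real.tan_eq_sin_div_cos, div_div_eq_mul_div] at hkey
  -- exp(-c x²) ≤ 1/(1 + c x²)
  have h1c : 0 < 1 + c * x^2 := by positivity
  have hexp : Real.exp (-c * x^2) ≤ 1 / (1 + c * x^2) := by
    have h2 : 1 + c * x^2 ≤ Real.exp (c * x^2) := by
      have := Real.add_one_le_exp (c * x^2); linarith
    rw [neg_mul, Real.exp_neg, inv_eq_one_div]
    exact one_div_le_one_div_of_le h1c h2
  -- upper bound on sin
  have hsinle : Real.sin x ≤ x - x^3/6 + x^4 * (5/96) := by
    have hb := Real.sin_bound (x := x) (by rw [abs_of_pos hx0]; exact hx1)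
    rw [abs_of_pos hx0] at hb
    have := le_of_abs_le hb
    nlinarith [pow_pos hx0 4, mul_le_mul_of_nonneg_left hx1 (pow_pos hx0 4).le]
  -- lower bound on cos
  have hcosge : 1 - x^2/2 ≤ Real.cos x := Real.one_sub_sq_div_two_le_cos
  -- combine
  have hchain : x * Real.cos x / Real.sin x < 1 / (1 + c * x^2) := lt_of_lt_of_le hkey hexp
  rw [div_lt_div_iff₀ hsin h1c, one_mul] at hchain
  have hA : x * (1 - x^2/2) * (1 + c * x^2) ≤ x * Real.cos x * (1 + c * x^2) := by
    apply mul_le_mul_of_nonneg_right _ (le_of_lt h1c)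
    exact mul_le_mul_of_nonneg_left hcosge (le_of_lt hx0)
  have hB : x * (1 - x^2/2) * (1 + c * x^2) < x - x^3/6 + x^4 * (5/96) :=
    lt_of_lt_of_le (lt_of_le_of_lt hA hchain) hsinle
  -- polynomial contradiction, using x < ε i.e. x*(5/96 + c/2) < c - 1/3 and x ≤ 1, x > 0
  have hεx : x * (5/96 + c/2) < c - 1/3 := by
    rw [hε] at hxε
    have := (lt_div_iff₀ (by linarith : (0:ℝ) < 5/96 + c/2)).mp hxε
    linarith
  have h3 := mul_lt_mul_of_pos_right hεx (pow_pos hx0 3)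
  have h4 : x^5 ≤ x^4 := pow_le_pow_of_le_one hx0.le hx1 (by norm_num)
  nlinarith [hB, h3, h4, hc0, pow_pos hx0 3, pow_pos hx0 4]
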